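/- A composition of even permutations of a finite set is even; consequently, a transposition (an odd permutation) cannot be written as a composition of permutations each of which fixes-and-ignores at least one element of a binary product structure of even size. In particular, the C^{n-1}NOT gate on n qubits cannot be implemented by composing gates that each act nontrivially on at most n-1 of the n bit positions. -/

import Mathlib

/-- A permutation of bit strings "fixes and ignores" position `i` if it never
changes bit `i` and its action on the other bits is independent of bit `i`. -/
def FixesAndIgnores {n : ℕ} (σ : Equiv.Perm (Fin n → Bool)) (i : Fin n) : Prop :=
  (∀ x, σ x i = x i) ∧
    (∀ x y : Fin n → Bool, (∀ j, j ≠ i → x j = y j) → ∀ j, j ≠ i → σ x j = σ y j)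

lemma sign_eq_one_of_fixesAndIgnores {n : ℕ} (σ : Equiv.Perm (Fin n → Bool)) (i : Fin n)
    (h : FixesAndIgnores σ i) : Equiv.Perm.sign σ = 1 := by
  obtain ⟨h1, h2⟩ := h
  set e : (Fin n → Bool) ≃ Bool × ({j : Fin n // j ≠ i} → Bool) := Equiv.funSplitAt i Bool with he
  set g : ({j : Fin n // j ≠ i} → Bool) → ({j : Fin n // j ≠ i} → Bool) :=
    fun y => fun j => σ (e.symm (true, y)) j.1 with hg
  have hsymm : ∀ (b : Bool) (y : {j : Fin n // j ≠ i} → Bool),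
      (e.symm (b, y)) i = b ∧ ∀ j : {j : Fin n // j ≠ i}, (e.symm (b, y)) j.1 = y j := by
    intro b y
    constructor
    · simp [he, Equiv.funSplitAt_symm_apply]
    · intro j
      simp [he, Equiv.funSplitAt_symm_apply, j.2]
  have ginj : Function.Injective g := by
    intro y y' hyy
    have : σ (e.symm (true, y)) = σ (e.symm (true, y')) := by
      funext j
      by_cases hj : j = i
      · subst hj
        rw [h1, h1, (hsymm true y).1, (hsymm true y').1]
      · have hj' : σ (e.symm (true, y)) j = g y ⟨j, hj⟩ := rfl
        have hj'' : σ (e.symm (true, y')) j = g y' ⟨j, hj⟩ := rfl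
        rw [hj', hj'', hyy]
    have := σ.injective this
    have := e.symm.injective this
    exact (Prod.mk.injEq _ _ _ _).mp this |>.2
  have gbij : Function.Bijective g := Finite.injective_iff_bijective.mp ginj
  set τ : Equiv.Perm ({j : Fin n // j ≠ i} → Bool) := Equiv.ofBijective g gbij with hτ
  have key : e.permCongr σ = Equiv.prodCongrRight (fun _ : Bool => τ) := by
    apply Equiv.ext
    rintro ⟨b, y⟩
    have : e.permCongr σ (b, y) = e (σ (e.symm (b, y))) := rfl
    rw [this]
    have hi : σ (e.symm (b, y)) i = b := by rw [h1, (hsymm b y).1]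
    have hoff : ∀ j : Fin n, j ≠ i → σ (e.symm (b, y)) j = σ (e.symm (true, y)) j := by
      intro j hj
      apply h2
      · intro k hk
        rw [(hsymm b y).2 ⟨k, hk⟩, (hsymm true y).2 ⟨k, hk⟩]
      · exact hj
    have : e (σ (e.symm (b, y))) = (b, τ y) := by
      rw [he]
      apply Prod.ext
      · simpa using hi
      · funext j
        exact hoff j.1 j.2
    rw [this]
    rfl
  have := Equiv.Perm.sign_permCongr e σ
  rw [key] at this
  rw [Equiv.Perm.sign_prodCongrRight] at this
  rw [← this]
  simp [Int.units_sq]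

theorem even_comp_and_cnnot_not_decomposable (n : ℕ) (hn : 3 ≤ n) :
    (∀ (α : Type) (_ : Fintype α) (_ : DecidableEq α) (l : List (Equiv.Perm α)),
        (∀ σ ∈ l, Equiv.Perm.sign σ = 1) → Equiv.Perm.sign l.prod = 1) ∧
      ¬ ∃ l : List (Equiv.Perm (Fin n → Bool)),
          (∀ σ ∈ l, ∃ i : Fin n, FixesAndIgnores σ i) ∧
            l.prod =
              Equiv.swap (fun _ : Fin n => true)
                (Function.update (fun _ : Fin n => true) ⟨n - 1, by omega⟩ false) := by
  have main : ∀ (α : Type) (_ : Fintype α) (_ : DecidableEq α) (l : List (Equiv.Perm α)),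
      (∀ σ ∈ l, Equiv.Perm.sign σ = 1) → Equiv.Perm.sign l.prod = 1 := by
    intro α _ _ l hl
    rw [map_list_prod]
    apply List.prod_eq_one
    intro x hx
    obtain ⟨σ, hσ, rfl⟩ := List.mem_map.mp hx
    exact hl σ hσ
  refine ⟨main, ?_⟩
  rintro ⟨l, hl, hprod⟩
  have h1 : Equiv.Perm.sign l.prod = 1 := by
    apply main _ inferInstance inferInstance
    intro σ hσ
    obtain ⟨i, hi⟩ := hl σ hσ
    exact sign_eq_one_of_fixesAndIgnores σ i hi
  rw [hprod] at h1
  have hne : (fun _ : Fin n => true) ≠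
      Function.update (fun _ : Fin n => true) ⟨n - 1, by omega⟩ false := by
    intro hcontra
    have := congrFun hcontra ⟨n - 1, by omega⟩
    simp [Function.update_self] at this
  rw [Equiv.Perm.sign_swap hne] at h1
  exact absurd h1 (by decide)
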